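/- Let (Ω, ℙ) be a probability space, S a standard Borel space, and let Ũ : Ω → S (with distribution μ), E₁ : Ω → ℝ and E₂ : Ω → ℝ be mutually independent, where E₁ and E₂ have Lebesgue densities p₁ and p₂ respectively. Let g₁ : ℝ × S → ℝ and g₂ : ℝ × S × ℝ → ℝ be measurable such that u ↦ g₁(u, x) and u ↦ g₂(u, x, c₁) are, for every fixed x and c₁, strictly increasing differentiable bijections of ℝ with everywhere positive derivatives. Define C₁ = g₁(E₁, Ũ) and C₂ = g₂(E₂, Ũ, C₁), and the weights ω₁(x, c₁) = p₁(g₁⁻¹(c₁, x)) / ∂ᵤg₁(g₁⁻¹(c₁, x), x) and ω₂(x, c₁, c₂) = p₂(g₂⁻¹(c₂, x, c₁)) / ∂ᵤg₂(g₂⁻¹(c₂, x, c₁), x, c₁). Then for (law of (C₁, C₂))-almost every (c₁, c₂), the regular conditional distribution of Ũ given (C₁, C₂) = (c₁, c₂) has density proportional to x ↦ ω₁(x, c₁) · ω₂(x, c₁, c₂) with respect to μ, i.e. it equals the normalization of μ.withDensity (x ↦ ω₁(x, c₁) ω₂(x, c₁, c₂)). -/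

import Mathlib

open MeasureTheory ProbabilityTheory

open scoped ENNReal

private lemma change_var_lemma2 (g d gInv : ℝ → ℝ) (hd : ∀ u, HasDerivAt g (d u) u)
    (hdpos : ∀ u, 0 < d u) (hbij : Function.Bijective g)
    (hleft : ∀ u, gInv (g u) = u) (p : ℝ → ℝ) (hp : ∀ u, 0 ≤ p u) (F : ℝ → ℝ≥0∞) :
    ∫⁻ c, F c * ENNReal.ofReal (p (gInv c) / d (gInv c)) =
      ∫⁻ e, F (g e) * ENNReal.ofReal (p e) := by
  have himg : g '' Set.univ = Set.univ := by
    rw [Set.image_univ]; exact hbij.2.range_eq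
  have h := lintegral_image_eq_lintegral_abs_det_fderiv_mul volume MeasurableSet.univ
    (f' := fun x => ContinuousLinearMap.smulRight (1 : ℝ →L[ℝ] ℝ) (d x))
    (fun x _ => (hd x).hasFDerivAt.hasFDerivWithinAt) hbij.1.injOn
    (fun c => F c * ENNReal.ofReal (p (gInv c) / d (gInv c)))
  rw [himg, setLIntegral_univ, setLIntegral_univ] at h
  rw [h]
  refine lintegral_congr fun e => ?_
  rw [ContinuousLinearMap.smulRight_one_eq_toSpanSingleton, ContinuousLinearMap.det_toSpanSingleton, hleft, abs_of_pos (hdpos e), mul_comm (ENNReal.ofReal (d e)),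
    mul_assoc, ← ENNReal.ofReal_mul (div_nonneg (hp e) (hdpos e).le)]
  rw [div_mul_cancel₀ _ (hdpos e).ne']

/-- **Conditional distribution of the global background variables given two continuous
conditions (two-condition instance of the paper's Lemma 2).**
With `C₁ = g₁ (E₁, Ũ)` and `C₂ = g₂ (E₂, Ũ, C₁)` as in the u-monotonic model
(`Ũ, E₁, E₂` mutually independent, expressed by the joint law being the product of
the marginal laws), for `(law of (C₁, C₂))`-almost every `(c₁, c₂)` the regular
conditional distribution of `Ũ` given `(C₁, C₂) = (c₁, c₂)` is the normalization of
`μ.withDensity (x ↦ ω₁ (x, c₁) * ω₂ (x, c₁, c₂))`. -/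
theorem condDistrib_two_conditions_eq_normalized_weighted_prior
    {Ω S : Type*} [MeasurableSpace Ω] [MeasurableSpace S] [StandardBorelSpace S] [Nonempty S]
    (P : Measure Ω) [IsProbabilityMeasure P]
    (U : Ω → S) (hU : Measurable U)
    (μ : Measure S) (hμ : μ = P.map U)
    (E₁ E₂ : Ω → ℝ) (hE₁ : Measurable E₁) (hE₂ : Measurable E₂)
    (p₁ p₂ : ℝ → ℝ)
    (hp₁_meas : Measurable p₁) (hp₁_nonneg : ∀ x, 0 ≤ p₁ x)
    (hp₂_meas : Measurable p₂) (hp₂_nonneg : ∀ x, 0 ≤ p₂ x)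
    -- mutual independence of `U`, `E₁`, `E₂` together with the marginal laws:
    -- the joint law is the product of `μ` and the two Lebesgue densities
    (hjoint : P.map (fun ω => (U ω, E₁ ω, E₂ ω)) =
      μ.prod ((volume.withDensity (fun u => ENNReal.ofReal (p₁ u))).prod
        (volume.withDensity (fun u => ENNReal.ofReal (p₂ u)))))
    (g₁ : ℝ × S → ℝ) (g₁' : ℝ × S → ℝ) (g₁Inv : ℝ × S → ℝ)
    (hg₁_meas : Measurable g₁) (hg₁'_meas : Measurable g₁') (hg₁Inv_meas : Measurable g₁Inv)
    (hg₁_deriv : ∀ x u, HasDerivAt (fun u => g₁ (u, x)) (g₁' (u, x)) u)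
    (hg₁'_pos : ∀ x u, 0 < g₁' (u, x))
    (hg₁_mono : ∀ x, StrictMono (fun u => g₁ (u, x)))
    (hg₁_bij : ∀ x, Function.Bijective (fun u => g₁ (u, x)))
    (hg₁Inv_left : ∀ x u, g₁Inv (g₁ (u, x), x) = u)
    (hg₁Inv_right : ∀ x c, g₁ (g₁Inv (c, x), x) = c)
    (g₂ : ℝ × S × ℝ → ℝ) (g₂' : ℝ × S × ℝ → ℝ) (g₂Inv : ℝ × S × ℝ → ℝ)
    (hg₂_meas : Measurable g₂) (hg₂'_meas : Measurable g₂') (hg₂Inv_meas : Measurable g₂Inv)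
    (hg₂_deriv : ∀ x c₁ u, HasDerivAt (fun u => g₂ (u, x, c₁)) (g₂' (u, x, c₁)) u)
    (hg₂'_pos : ∀ x c₁ u, 0 < g₂' (u, x, c₁))
    (hg₂_mono : ∀ x c₁, StrictMono (fun u => g₂ (u, x, c₁)))
    (hg₂_bij : ∀ x c₁, Function.Bijective (fun u => g₂ (u, x, c₁)))
    (hg₂Inv_left : ∀ x c₁ u, g₂Inv (g₂ (u, x, c₁), x, c₁) = u)
    (hg₂Inv_right : ∀ x c₁ c₂, g₂ (g₂Inv (c₂, x, c₁), x, c₁) = c₂)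
    (C₁ C₂ : Ω → ℝ)
    (hC₁ : C₁ = fun ω => g₁ (E₁ ω, U ω))
    (hC₂ : C₂ = fun ω => g₂ (E₂ ω, U ω, C₁ ω)) :
    ∀ᵐ c ∂(P.map (fun ω => (C₁ ω, C₂ ω))),
      condDistrib U (fun ω => (C₁ ω, C₂ ω)) P c =
        ((μ.withDensity (fun x => ENNReal.ofReal
            ((p₁ (g₁Inv (c.1, x)) / g₁' (g₁Inv (c.1, x), x)) *
              (p₂ (g₂Inv (c.2, x, c.1)) / g₂' (g₂Inv (c.2, x, c.1), x, c.1))))) Set.univ)⁻¹ •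
          μ.withDensity (fun x => ENNReal.ofReal
            ((p₁ (g₁Inv (c.1, x)) / g₁' (g₁Inv (c.1, x), x)) *
              (p₂ (g₂Inv (c.2, x, c.1)) / g₂' (g₂Inv (c.2, x, c.1), x, c.1)))) := by
  classical
  have hμ_prob : IsProbabilityMeasure μ := by
    rw [hμ]; exact Measure.isProbabilityMeasure_map hU.aemeasurable
  have hC₁_meas : Measurable C₁ := by
    rw [hC₁]; exact hg₁_meas.comp (hE₁.prodMk hU)
  have hC₂_meas : Measurable C₂ := by
    rw [hC₂]; exact hg₂_meas.comp (hE₂.prodMk (hU.prodMk hC₁_meas))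
  have hX : Measurable fun ω => (C₁ ω, C₂ ω) := hC₁_meas.prodMk hC₂_meas
  set Wf : (ℝ × ℝ) × S → ℝ≥0∞ := fun q => ENNReal.ofReal
      ((p₁ (g₁Inv (q.1.1, q.2)) / g₁' (g₁Inv (q.1.1, q.2), q.2)) *
        (p₂ (g₂Inv (q.1.2, q.2, q.1.1)) / g₂' (g₂Inv (q.1.2, q.2, q.1.1), q.2, q.1.1)))
    with hWf
  have hWf_meas : Measurable Wf := by
    have m1 : Measurable fun q : (ℝ × ℝ) × S => g₁Inv (q.1.1, q.2) :=
      hg₁Inv_meas.comp (measurable_fst.fst.prodMk measurable_snd)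
    have m2 : Measurable fun q : (ℝ × ℝ) × S => g₂Inv (q.1.2, q.2, q.1.1) :=
      hg₂Inv_meas.comp (measurable_fst.snd.prodMk (measurable_snd.prodMk measurable_fst.fst))
    exact (((hp₁_meas.comp m1).div (hg₁'_meas.comp (m1.prodMk measurable_snd))).mul
      ((hp₂_meas.comp m2).div (hg₂'_meas.comp
        (m2.prodMk (measurable_snd.prodMk measurable_fst.fst))))).ennreal_ofReal
  set m : ℝ × ℝ → ℝ≥0∞ := fun c => ∫⁻ x, Wf (c, x) ∂μ with hm
  have hm_meas : Measurable m := hWf_meas.lintegral_prod_right'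
  have hker_meas : Measurable fun c : ℝ × ℝ =>
      (m c)⁻¹ • μ.withDensity (fun x => Wf (c, x)) := by
    refine Measure.measurable_of_measurable_coe _ fun s hs => ?_
    simp only [Measure.smul_apply, smul_eq_mul]
    have hwd : ∀ c : ℝ × ℝ, (μ.withDensity fun x => Wf (c, x)) s
        = ∫⁻ x, Set.indicator (Prod.snd ⁻¹' s) Wf (c, x) ∂μ := by
      intro c
      rw [withDensity_apply _ hs, ← lintegral_indicator hs]
      refine lintegral_congr fun x => ?_
      by_cases hx : x ∈ s <;> simp [Set.indicator_apply, hx]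
    simp_rw [hwd]
    exact hm_meas.inv.mul
      (Measurable.lintegral_prod_right' (hWf_meas.indicator (measurable_snd hs)))
  set κ : Kernel (ℝ × ℝ) S :=
    ⟨fun c => (m c)⁻¹ • μ.withDensity (fun x => Wf (c, x)), hker_meas⟩ with hκdef
  have hκ_app : ∀ c, κ c = (m c)⁻¹ • μ.withDensity (fun x => Wf (c, x)) := fun c => rfl
  have huniv : ∀ c : ℝ × ℝ, (μ.withDensity fun x => Wf (c, x)) Set.univ = m c := by
    intro c
    rw [withDensity_apply _ MeasurableSet.univ, setLIntegral_univ, hm]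
  haveI hκ_fin : IsFiniteKernel κ := by
    refine ⟨⟨1, ENNReal.one_lt_top, fun c => ?_⟩⟩
    rw [hκ_app, Measure.smul_apply, smul_eq_mul, huniv]
    rcases eq_or_ne (m c) 0 with h | h
    · simp [h]
    rcases eq_or_ne (m c) ∞ with h' | h'
    · simp [h']
    · rw [ENNReal.inv_mul_cancel h h']
  -- the key change-of-variables identity
  have key : ∀ f : (ℝ × ℝ) × S → ℝ≥0∞, Measurable f →
      ∫⁻ z, f z ∂(P.map fun ω => ((C₁ ω, C₂ ω), U ω)) =
        ∫⁻ c, ∫⁻ x, f (c, x) * Wf (c, x) ∂μ ∂(volume.prod volume) := by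
    intro f hf
    set T : S × ℝ × ℝ → (ℝ × ℝ) × S := fun z =>
      ((g₁ (z.2.1, z.1), g₂ (z.2.2, z.1, g₁ (z.2.1, z.1))), z.1) with hT
    have hT1 : Measurable fun z : S × ℝ × ℝ => g₁ (z.2.1, z.1) :=
      hg₁_meas.comp (measurable_snd.fst.prodMk measurable_fst)
    have hT_meas : Measurable T :=
      (hT1.prodMk (hg₂_meas.comp
        (measurable_snd.snd.prodMk (measurable_fst.prodMk hT1)))).prodMk measurable_fst
    have hcomp : (fun ω => ((C₁ ω, C₂ ω), U ω)) = T ∘ fun ω => (U ω, E₁ ω, E₂ ω) := by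
      funext ω; simp [hT, hC₁, hC₂]
    rw [hcomp, ← Measure.map_map hT_meas (hU.prodMk (hE₁.prodMk hE₂)), hjoint,
      lintegral_map hf hT_meas, lintegral_prod (fun z => f (T z)) (hf.comp hT_meas).aemeasurable]
    have inner_eq : ∀ x : S,
        (∫⁻ e, f (T (x, e)) ∂((volume.withDensity fun u => ENNReal.ofReal (p₁ u)).prod
            (volume.withDensity fun u => ENNReal.ofReal (p₂ u)))) =
          ∫⁻ c, f (c, x) * Wf (c, x) ∂(volume.prod volume) := by
      intro x
      rw [lintegral_prod (fun e => f (T (x, e))) ((hf.comp hT_meas).comp measurable_prodMk_left).aemeasurable]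
      set F₁ : ℝ → ℝ≥0∞ := fun c₁ => ∫⁻ c₂, f ((c₁, c₂), x) *
        ENNReal.ofReal (p₂ (g₂Inv (c₂, x, c₁)) / g₂' (g₂Inv (c₂, x, c₁), x, c₁)) with hF₁
      have step1 : ∀ c₁ : ℝ,
          (∫⁻ e₂, f ((c₁, g₂ (e₂, x, c₁)), x)
            ∂(volume.withDensity fun u => ENNReal.ofReal (p₂ u))) = F₁ c₁ := by
        intro c₁
        rw [lintegral_withDensity_eq_lintegral_mul volume hp₂_meas.ennreal_ofReal
          (show Measurable fun e₂ => f ((c₁, g₂ (e₂, x, c₁)), x) from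
            hf.comp (((measurable_const.prodMk (hg₂_meas.comp
              (measurable_id.prodMk measurable_const)))).prodMk measurable_const))]
        simp only [Pi.mul_apply]
        refine Eq.trans (lintegral_congr fun e₂ => mul_comm _ _) ?_
        exact (change_var_lemma2 (fun e => g₂ (e, x, c₁)) (fun e => g₂' (e, x, c₁))
          (fun c => g₂Inv (c, x, c₁)) (hg₂_deriv x c₁) (hg₂'_pos x c₁) (hg₂_bij x c₁)
          (hg₂Inv_left x c₁) p₂ hp₂_nonneg (fun c₂ => f ((c₁, c₂), x))).symm
      have hF₁_meas : Measurable F₁ := by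
        rw [hF₁]
        have mInv : Measurable fun q : ℝ × ℝ => g₂Inv (q.2, x, q.1) :=
          hg₂Inv_meas.comp (measurable_snd.prodMk (measurable_const.prodMk measurable_fst))
        exact Measurable.lintegral_prod_right'
          ((hf.comp ((measurable_fst.prodMk measurable_snd).prodMk measurable_const)).mul
            (((hp₂_meas.comp mInv).div (hg₂'_meas.comp
              (mInv.prodMk (measurable_const.prodMk measurable_fst)))).ennreal_ofReal))
      have hinteg_meas : ∀ c₁ : ℝ, Measurable fun c₂ => f ((c₁, c₂), x) *
          ENNReal.ofReal (p₂ (g₂Inv (c₂, x, c₁)) / g₂' (g₂Inv (c₂, x, c₁), x, c₁)) := by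
        intro c₁
        have mInv : Measurable fun c₂ : ℝ => g₂Inv (c₂, x, c₁) :=
          hg₂Inv_meas.comp (measurable_id.prodMk measurable_const)
        exact (hf.comp ((measurable_const.prodMk measurable_id).prodMk
            measurable_const)).mul
          (((hp₂_meas.comp mInv).div (hg₂'_meas.comp
            (mInv.prodMk measurable_const))).ennreal_ofReal)
      calc (∫⁻ e₁, ∫⁻ e₂, f (T (x, (e₁, e₂)))
              ∂(volume.withDensity fun u => ENNReal.ofReal (p₂ u))
              ∂(volume.withDensity fun u => ENNReal.ofReal (p₁ u)))
          = ∫⁻ e₁, F₁ (g₁ (e₁, x))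
              ∂(volume.withDensity fun u => ENNReal.ofReal (p₁ u)) :=
            lintegral_congr fun e₁ => step1 (g₁ (e₁, x))
        _ = ∫⁻ c₁, F₁ c₁ *
              ENNReal.ofReal (p₁ (g₁Inv (c₁, x)) / g₁' (g₁Inv (c₁, x), x)) := by
            rw [lintegral_withDensity_eq_lintegral_mul volume hp₁_meas.ennreal_ofReal
              (show Measurable fun e₁ => F₁ (g₁ (e₁, x)) from
                hF₁_meas.comp (hg₁_meas.comp (measurable_id.prodMk measurable_const)))]
            simp only [Pi.mul_apply]
            refine Eq.trans (lintegral_congr fun e₁ => mul_comm _ _) ?_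
            exact (change_var_lemma2 (fun e => g₁ (e, x)) (fun e => g₁' (e, x))
              (fun c => g₁Inv (c, x)) (hg₁_deriv x) (hg₁'_pos x) (hg₁_bij x)
              (hg₁Inv_left x) p₁ hp₁_nonneg F₁).symm
        _ = ∫⁻ c₁, ∫⁻ c₂, f ((c₁, c₂), x) * Wf ((c₁, c₂), x) := by
            refine lintegral_congr fun c₁ => ?_
            rw [hF₁, ← lintegral_mul_const _ (hinteg_meas c₁)]
            refine lintegral_congr fun c₂ => ?_
            simp only [hWf]
            rw [ENNReal.ofReal_mul (div_nonneg (hp₁_nonneg _) (hg₁'_pos _ _).le)]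
            ring
        _ = ∫⁻ c, f (c, x) * Wf (c, x) ∂(volume.prod volume) := by
            refine (lintegral_prod (fun c => f (c, x) * Wf (c, x)) ?_).symm
            exact ((hf.comp (measurable_id.prodMk measurable_const)).mul
              (hWf_meas.comp (measurable_id.prodMk measurable_const))).aemeasurable
    rw [lintegral_congr inner_eq]
    refine lintegral_lintegral_swap ?_
    exact ((hf.comp (measurable_snd.prodMk measurable_fst)).mul
      (hWf_meas.comp (measurable_snd.prodMk measurable_fst))).aemeasurable
  -- the law of (C₁, C₂)
  have hρ : (P.map fun ω => (C₁ ω, C₂ ω)) = (volume.prod volume).withDensity m := by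
    have hmm : (P.map fun ω => (C₁ ω, C₂ ω))
        = (P.map fun ω => ((C₁ ω, C₂ ω), U ω)).map Prod.fst := by
      rw [Measure.map_map measurable_fst (hX.prodMk hU)]
      rfl
    ext s hs
    rw [hmm, Measure.map_apply measurable_fst hs,
      ← lintegral_indicator_one (measurable_fst hs),
      key _ (measurable_one.indicator (measurable_fst hs)), withDensity_apply _ hs,
      ← lintegral_indicator hs m]
    refine lintegral_congr fun c => ?_
    by_cases hc : c ∈ s
    · simp [Set.indicator_apply, hc, hm]
    · simp [Set.indicator_apply, hc]
  haveI : IsProbabilityMeasure (P.map fun ω => (C₁ ω, C₂ ω)) :=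
    Measure.isProbabilityMeasure_map hX.aemeasurable
  have hm_ae : ∀ᵐ c ∂(volume.prod volume), m c < ∞ := by
    refine ae_lt_top hm_meas ?_
    have h1 : ∫⁻ c, m c ∂(volume.prod volume)
        = ((volume.prod volume).withDensity m) Set.univ := by
      rw [withDensity_apply _ MeasurableSet.univ, setLIntegral_univ]
    rw [h1, ← hρ, measure_univ]
    exact ENNReal.one_ne_top
  -- the disintegration identity
  have hκeq : (P.map fun ω => ((C₁ ω, C₂ ω), U ω)) = (P.map fun ω => (C₁ ω, C₂ ω)) ⊗ₘ κ := by
    ext s hs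
    rw [Measure.compProd_apply hs, hρ,
      lintegral_withDensity_eq_lintegral_mul (volume.prod volume) hm_meas
        (Kernel.measurable_kernel_prodMk_left hs)]
    have hpt : ∀ᵐ c ∂(volume.prod volume),
        (m * fun c => κ c (Prod.mk c ⁻¹' s)) c
          = (μ.withDensity fun x => Wf (c, x)) (Prod.mk c ⁻¹' s) := by
      filter_upwards [hm_ae] with c hc
      simp only [Pi.mul_apply]
      rw [hκ_app, Measure.smul_apply, smul_eq_mul]
      rcases eq_or_ne (m c) 0 with h0 | h0
      · have htle : (μ.withDensity fun x => Wf (c, x)) (Prod.mk c ⁻¹' s) ≤ m c := by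
          rw [← huniv c]
          exact measure_mono (Set.subset_univ _)
        have ht0 : (μ.withDensity fun x => Wf (c, x)) (Prod.mk c ⁻¹' s) = 0 :=
          le_antisymm (htle.trans_eq h0) zero_le
        simp [h0, ht0]
      · rw [← mul_assoc, ENNReal.mul_inv_cancel h0 hc.ne, one_mul]
    rw [lintegral_congr_ae hpt, ← lintegral_indicator_one hs,
      key _ (measurable_one.indicator hs)]
    refine lintegral_congr fun c => ?_
    rw [withDensity_apply _ (measurable_prodMk_left hs),
      ← lintegral_indicator (measurable_prodMk_left hs)]
    refine lintegral_congr fun x => ?_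
    by_cases hcx : (c, x) ∈ s <;> simp [Set.indicator_apply, hcx]
  have h := condDistrib_ae_eq_of_measure_eq_compProd (fun ω => (C₁ ω, C₂ ω)) hU.aemeasurable hκeq
  filter_upwards [h] with c hc
  rw [hc, hκ_app]
  have huniv' : (μ.withDensity fun x => ENNReal.ofReal
      ((p₁ (g₁Inv (c.1, x)) / g₁' (g₁Inv (c.1, x), x)) *
        (p₂ (g₂Inv (c.2, x, c.1)) / g₂' (g₂Inv (c.2, x, c.1), x, c.1)))) Set.univ = m c :=
    huniv c
  rw [huniv']
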